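/- Value of the fourth-order 2-point function at zero momenta: define, for real p₁, p₂ > 0 with p₁ ≠ p₂, G₄(p₁,p₂) := (2/((1+p₁+p₂)²(p₁−p₂))) · [ 3(log(1+p₁) − log(1+p₂))²/((1+p₁+p₂)(p₁−p₂)) + 2log(1+p₁)/(p₁(1+2p₁)(1+p₁)) − 2log(1+p₂)/(p₂(1+2p₂)(1+p₂)) − (1+2p₂)(π²/6 − 2Li₂(−p₁) − log²(1+p₁))/((1+2p₁)²(1+p₁+p₂)) + (1+2p₁)(π²/6 − 2Li₂(−p₂) − log²(1+p₂))/((1+2p₂)²(1+p₁+p₂)) ]. Then G₄(p₁,p₂) tends to 2(π² − 6) as (p₁,p₂) → (0,0) within the set {(p₁,p₂) : p₁ > 0, p₂ > 0, p₁ ≠ p₂}. -/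

import Mathlib

open MeasureTheory Real Filter Set

/-- The real dilogarithm, `Li₂(x) = −∫₀ˣ log(1−u)/u du`. -/
noncomputable def Li2 (x : ℝ) : ℝ := -∫ u in (0:ℝ)..x, Real.log (1 - u) / u

/-- The fourth-order 2-point function `G₄(p₁,p₂)` of the 2D noncommutative 3-colour model. -/
noncomputable def G4 (p₁ p₂ : ℝ) : ℝ :=
  (2 / ((1 + p₁ + p₂) ^ 2 * (p₁ - p₂))) *
    (3 * (Real.log (1 + p₁) - Real.log (1 + p₂)) ^ 2 / ((1 + p₁ + p₂) * (p₁ - p₂))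
      + 2 * Real.log (1 + p₁) / (p₁ * (1 + 2 * p₁) * (1 + p₁))
      - 2 * Real.log (1 + p₂) / (p₂ * (1 + 2 * p₂) * (1 + p₂))
      - (1 + 2 * p₂) * (π ^ 2 / 6 - 2 * Li2 (-p₁) - Real.log (1 + p₁) ^ 2)
          / ((1 + 2 * p₁) ^ 2 * (1 + p₁ + p₂))
      + (1 + 2 * p₁) * (π ^ 2 / 6 - 2 * Li2 (-p₂) - Real.log (1 + p₂) ^ 2)
          / ((1 + 2 * p₂) ^ 2 * (1 + p₁ + p₂)))


lemma log1p_le {x : ℝ} (hx : 0 ≤ x) : Real.log (1 + x) ≤ x := by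
  have := Real.log_le_sub_one_of_pos (x := 1 + x) (by linarith)
  linarith

lemma log1p_ge {x : ℝ} (hx : 0 ≤ x) : x - x^2/2 ≤ Real.log (1 + x) := by
  have key : ∀ y ∈ Set.Ici (0:ℝ), 0 ≤ Real.log (1 + y) - y + y^2/2 := by
    intro y hy
    have h0 : (Real.log (1 + 0) - 0 + 0^2/2 : ℝ) = 0 := by norm_num
    have hmono : MonotoneOn (fun y : ℝ => Real.log (1 + y) - y + y^2/2) (Set.Ici 0) := by
      apply monotoneOn_of_deriv_nonneg (convex_Ici 0)
      · apply ContinuousOn.add (ContinuousOn.sub ?_ (continuousOn_id)) (by fun_prop)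
        apply ContinuousOn.log (by fun_prop)
        intro z hz; simp at hz; positivity
      · intro z hz
        apply DifferentiableAt.differentiableWithinAt
        have : (1:ℝ) + z ≠ 0 := by simp [interior_Ici] at hz; positivity
        fun_prop (disch := assumption)
      · intro z hz
        simp [interior_Ici] at hz
        have h1 : (1:ℝ) + z > 0 := by linarith
        have : HasDerivAt (fun y : ℝ => Real.log (1 + y) - y + y^2/2)
            (1/(1+z) - 1 + z) z := by
          have hl : HasDerivAt (fun y : ℝ => Real.log (1 + y)) (1/(1+z)) z := by
            have := (Real.hasDerivAt_log (by linarith : (1:ℝ)+z ≠ 0)).comp z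
              ((hasDerivAt_const z (1:ℝ)).add (hasDerivAt_id z))
            simpa [one_div, Function.comp_def] using this
          have := (hl.sub (hasDerivAt_id z)).add ((hasDerivAt_pow 2 z).div_const 2)
          exact this.congr_deriv (by ring)
        rw [this.deriv]
        have heq : 1/(1+z) - 1 + z = z^2/(1+z) := by field_simp; ring
        rw [heq]; positivity
    have := hmono (Set.self_mem_Ici) hy hy
    simp at this ⊢
    linarith [this]
  have := key x hx
  linarith

lemma log1p_le3 {x : ℝ} (hx : 0 ≤ x) : Real.log (1 + x) ≤ x - x^2/2 + x^3/3 := by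
  have key : ∀ y ∈ Set.Ici (0:ℝ), 0 ≤ y - y^2/2 + y^3/3 - Real.log (1 + y) := by
    intro y hy
    have hmono : MonotoneOn (fun y : ℝ => y - y^2/2 + y^3/3 - Real.log (1 + y)) (Set.Ici 0) := by
      apply monotoneOn_of_deriv_nonneg (convex_Ici 0)
      · apply ContinuousOn.sub (by fun_prop)
        apply ContinuousOn.log (by fun_prop)
        intro z hz; simp at hz; positivity
      · intro z hz
        apply DifferentiableAt.differentiableWithinAt
        have : (1:ℝ) + z ≠ 0 := by simp [interior_Ici] at hz; positivity
        fun_prop (disch := assumption)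
      · intro z hz
        simp [interior_Ici] at hz
        have h1 : (1:ℝ) + z > 0 := by linarith
        have hD : HasDerivAt (fun y : ℝ => y - y^2/2 + y^3/3 - Real.log (1 + y))
            (1 - z + z^2 - 1/(1+z)) z := by
          have hl : HasDerivAt (fun y : ℝ => Real.log (1 + y)) (1/(1+z)) z := by
            have := (Real.hasDerivAt_log (by linarith : (1:ℝ)+z ≠ 0)).comp z
              ((hasDerivAt_const z (1:ℝ)).add (hasDerivAt_id z))
            simpa [one_div, Function.comp_def] using this
          have := (((hasDerivAt_id z).sub ((hasDerivAt_pow 2 z).div_const 2)).add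
            ((hasDerivAt_pow 3 z).div_const 3)).sub hl
          exact this.congr_deriv (by ring)
        rw [hD.deriv]
        have heq : 1 - z + z^2 - 1/(1+z) = z^3/(1+z) := by field_simp; ring
        rw [heq]; positivity
    have := hmono (Set.self_mem_Ici) hy hy
    simpa using this
  have := key x hx
  linarith

lemma tendsto_log1p_div :
    Tendsto (fun p : ℝ => Real.log (1 + p) / p) (nhdsWithin 0 (Set.Ioi 0)) (nhds 1) := by
  apply tendsto_of_tendsto_of_tendsto_of_le_of_le'
    (g := fun p : ℝ => 1 - p/2) (h := fun _ : ℝ => (1:ℝ))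
  · have : Tendsto (fun p : ℝ => 1 - p/2) (nhds (0:ℝ)) (nhds 1) := by
      have := (tendsto_id (α := ℝ) (x := nhds 0)).div_const 2
      simpa using (tendsto_const_nhds (x := (1:ℝ)) (f := nhds (0:ℝ))).sub this
    exact this.mono_left nhdsWithin_le_nhds
  · exact tendsto_const_nhds
  · filter_upwards [self_mem_nhdsWithin] with p hp
    have hp' : 0 < p := hp
    rw [le_div_iff₀ hp']
    have := log1p_ge hp'.le
    nlinarith
  · filter_upwards [self_mem_nhdsWithin] with p hp
    have hp' : 0 < p := hp
    rw [div_le_one hp']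
    exact log1p_le hp'.le

lemma tendsto_sub_log1p_div_sq :
    Tendsto (fun p : ℝ => (p - Real.log (1 + p)) / p^2) (nhdsWithin 0 (Set.Ioi 0)) (nhds (1/2)) := by
  apply tendsto_of_tendsto_of_tendsto_of_le_of_le'
    (g := fun p : ℝ => 1/2 - p/3) (h := fun _ : ℝ => (1/2:ℝ))
  · have : Tendsto (fun p : ℝ => 1/2 - p/3) (nhds (0:ℝ)) (nhds (1/2)) := by
      have := (tendsto_id (α := ℝ) (x := nhds 0)).div_const 3
      simpa using (tendsto_const_nhds (x := (1/2:ℝ)) (f := nhds (0:ℝ))).sub this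
    exact this.mono_left nhdsWithin_le_nhds
  · exact tendsto_const_nhds
  · filter_upwards [self_mem_nhdsWithin] with p hp
    have hp' : 0 < p := hp
    rw [le_div_iff₀ (by positivity)]
    have := log1p_le3 hp'.le
    nlinarith
  · filter_upwards [self_mem_nhdsWithin] with p hp
    have hp' : 0 < p := hp
    rw [div_le_iff₀ (by positivity)]
    have := log1p_ge hp'.le
    nlinarith

lemma tendsto_log1p : Tendsto (fun p : ℝ => Real.log (1 + p)) (nhdsWithin 0 (Set.Ioi 0)) (nhds 0) := by
  have : Tendsto (fun p : ℝ => Real.log (1 + p)) (nhds (0:ℝ)) (nhds 0) := by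
    have h : ContinuousAt (fun p : ℝ => Real.log (1 + p)) 0 := by
      apply ContinuousAt.log (by fun_prop); norm_num
    simpa using h.tendsto
  exact this.mono_left nhdsWithin_le_nhds

open MeasureTheory in
lemma g_meas : Measurable (fun u : ℝ => Real.log (1 - u) / u) :=
  (Real.measurable_log.comp (measurable_const.sub measurable_id)).div measurable_id

lemma g_bound {u : ℝ} (hu : u ≤ 0) : ‖Real.log (1 - u) / u‖ ≤ 1 := by
  rcases eq_or_lt_of_le hu with h | h
  · subst h; norm_num
  · have h1 : (0:ℝ) < 1 - u := by linarith
    have hlog0 : 0 ≤ Real.log (1 - u) := Real.log_nonneg (by linarith)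
    have hlog : Real.log (1 - u) ≤ -u := by
      have := Real.log_le_sub_one_of_pos h1; linarith
    rw [norm_div, Real.norm_eq_abs, Real.norm_eq_abs, abs_of_nonneg hlog0,
      abs_of_neg h, div_le_one (by linarith)]
    exact hlog

open MeasureTheory in
lemma li2_integrable {x : ℝ} (hx : x ≤ 0) :
    IntervalIntegrable (fun u : ℝ => Real.log (1 - u) / u) volume 0 x := by
  rw [intervalIntegrable_iff, Set.uIoc_of_ge hx]
  apply MeasureTheory.Integrable.mono' (integrable_const (1:ℝ))
    (g_meas.aestronglyMeasurable.restrict)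
  filter_upwards [ae_restrict_mem measurableSet_Ioc] with u hu
  exact g_bound hu.2

lemma li2_hasDerivAt {x : ℝ} (hx : x < 0) :
    HasDerivAt Li2 (-(Real.log (1 - x) / x)) x := by
  unfold Li2
  apply HasDerivAt.neg
  apply intervalIntegral.integral_hasDerivAt_right (li2_integrable hx.le)
  · exact ⟨Set.univ, Filter.univ_mem, by simpa using g_meas.aestronglyMeasurable⟩
  · have h1 : (1:ℝ) - x ≠ 0 := by linarith
    have hx0 : x ≠ 0 := hx.ne
    fun_prop (disch := assumption)

lemma li2_neg_hasDerivAt {p : ℝ} (hp : 0 < p) :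
    HasDerivAt (fun q : ℝ => Li2 (-q)) (-(Real.log (1 + p) / p)) p := by
  have h := (li2_hasDerivAt (x := -p) (by linarith)).comp p (hasDerivAt_neg p)
  refine h.congr_deriv ?_
  rw [sub_neg_eq_add]
  field_simp

lemma li2_tendsto : Tendsto (fun p : ℝ => Li2 (-p)) (nhdsWithin 0 (Set.Ioi 0)) (nhds 0) := by
  apply squeeze_zero_norm' (a := fun p : ℝ => p)
  · filter_upwards [self_mem_nhdsWithin] with p hp
    have hp' : (0:ℝ) < p := hp
    unfold Li2
    rw [norm_neg]
    have := intervalIntegral.norm_integral_le_of_norm_le_const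
      (C := 1) (a := (0:ℝ)) (b := -p) (f := fun u : ℝ => Real.log (1 - u) / u) ?_
    · simpa [abs_of_pos hp'] using this
    · intro u hu
      rw [Set.uIoc_of_ge (by linarith : -p ≤ (0:ℝ))] at hu
      exact g_bound hu.2
  · exact tendsto_id.mono_left nhdsWithin_le_nhds

lemma slope_tendsto {F F' : ℝ → ℝ} {L : ℝ}
    (hderiv : ∀ x ∈ Set.Ioi (0:ℝ), HasDerivAt F (F' x) x)
    (hlim : Tendsto F' (nhdsWithin 0 (Set.Ioi 0)) (nhds L)) :
    Tendsto (fun x : ℝ × ℝ => (F x.1 - F x.2) / (x.1 - x.2))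
      (nhdsWithin (0, 0) {x : ℝ × ℝ | 0 < x.1 ∧ 0 < x.2 ∧ x.1 ≠ x.2}) (nhds L) := by
  rw [Metric.tendsto_nhdsWithin_nhds] at hlim ⊢
  intro ε hε
  obtain ⟨δ, hδ, H⟩ := hlim ε hε
  refine ⟨δ, hδ, ?_⟩
  rintro ⟨p, q⟩ ⟨hp, hq, hne⟩ hdist
  simp only [Prod.dist_eq, max_lt_iff] at hdist
  obtain ⟨hpd, hqd⟩ := hdist
  rw [Real.dist_eq, sub_zero, abs_of_pos hp] at hpd
  rw [Real.dist_eq, sub_zero, abs_of_pos hq] at hqd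
  set a := min p q with ha
  set b := max p q with hb
  have hab : a < b := min_lt_max.mpr hne
  have ha0 : 0 < a := lt_min hp hq
  have hbδ : b < δ := max_lt hpd hqd
  have hcont : ContinuousOn F (Set.Icc a b) := fun x hx =>
    ((hderiv x (lt_of_lt_of_le ha0 hx.1)).continuousAt).continuousWithinAt
  obtain ⟨c, hc, hceq⟩ := exists_hasDerivAt_eq_slope F F' hab hcont
    (fun x hx => hderiv x (lt_trans ha0 hx.1))
  have hcδ : dist c (0:ℝ) < δ := by
    rw [Real.dist_eq, sub_zero, abs_of_pos (lt_trans ha0 hc.1)]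
    exact lt_trans hc.2 hbδ
  have hce := H (lt_trans ha0 hc.1) hcδ
  have hslope : (F b - F a) / (b - a) = (F p - F q) / (p - q) := by
    rcases lt_or_gt_of_ne hne with h | h
    · rw [ha, hb, min_eq_left h.le, max_eq_right h.le]
      rw [← neg_div_neg_eq]; ring_nf
    · rw [ha, hb, min_eq_right h.le, max_eq_left h.le]
  rwa [hceq, hslope] at hce

noncomputable def fF (p : ℝ) : ℝ := 2 * Real.log (1 + p) / (p * (1 + 2*p) * (1 + p))

noncomputable def fF' (p : ℝ) : ℝ :=
  (2 * (1/(1+p)) * (p * (1 + 2*p) * (1 + p)) - 2 * Real.log (1 + p) * (1 + 6*p + 6*p^2))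
    / (p * (1 + 2*p) * (1 + p))^2

lemma hasDerivAt_log1p {p : ℝ} (hp : (1:ℝ) + p ≠ 0) :
    HasDerivAt (fun q : ℝ => Real.log (1 + q)) (1/(1+p)) p := by
  have := (Real.hasDerivAt_log hp).comp p
    ((hasDerivAt_const p (1:ℝ)).add (hasDerivAt_id p))
  simpa [one_div, Function.comp_def] using this

lemma hasDerivAt_q (p : ℝ) :
    HasDerivAt (fun q : ℝ => q * (1 + 2*q) * (1 + q)) (1 + 6*p + 6*p^2) p := by
  have hlin : HasDerivAt (fun q : ℝ => 1 + 2*q) 2 p := by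
    simpa using ((hasDerivAt_id p).const_mul 2).const_add 1
  have hlin2 : HasDerivAt (fun q : ℝ => 1 + q) 1 p := by
    simpa using (hasDerivAt_id p).const_add 1
  have h1 : HasDerivAt (fun q : ℝ => q * (1 + 2*q)) (1*(1+2*p) + p*2) p :=
    (hasDerivAt_id p).mul hlin
  have h2 : HasDerivAt (fun q : ℝ => q * (1 + 2*q) * (1 + q))
      ((1*(1+2*p) + p*2) * (1+p) + (p*(1+2*p)) * 1) p := h1.mul hlin2
  convert h2 using 1; ring

lemma hasDerivAt_fF {p : ℝ} (hp : 0 < p) : HasDerivAt fF (fF' p) p := by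
  have hq : p * (1 + 2*p) * (1 + p) ≠ 0 := by positivity
  have hc : HasDerivAt (fun q : ℝ => 2 * Real.log (1 + q)) (2 * (1/(1+p))) p :=
    (hasDerivAt_log1p (by positivity)).const_mul 2
  exact hc.div (hasDerivAt_q p) hq

lemma tendsto_fF' : Tendsto fF' (nhdsWithin 0 (Set.Ioi 0)) (nhds (-7)) := by
  have heq : ∀ p ∈ Set.Ioi (0:ℝ), (2 * ((p - Real.log (1+p))/p^2) + 4 - 12 * (Real.log (1+p)/p)
      - 12 * Real.log (1+p)) / (((1+2*p)*(1+p))^2) = fF' p := by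
    intro p hp
    have hp' : (0:ℝ) < p := hp
    unfold fF'
    rw [div_eq_div_iff (by positivity) (by positivity)]
    field_simp
    ring
  apply Tendsto.congr' (eventuallyEq_of_mem self_mem_nhdsWithin heq)
  have hnum : Tendsto (fun p : ℝ => 2 * ((p - Real.log (1+p))/p^2) + 4 - 12 * (Real.log (1+p)/p)
      - 12 * Real.log (1+p)) (nhdsWithin 0 (Set.Ioi 0)) (nhds (2 * (1/2) + 4 - 12 * 1 - 12 * 0)) :=
    (((tendsto_sub_log1p_div_sq.const_mul 2).add_const 4).sub
      (tendsto_log1p_div.const_mul 12)).sub (tendsto_log1p.const_mul 12)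
  have hden : Tendsto (fun p : ℝ => ((1+2*p)*(1+p))^2) (nhdsWithin 0 (Set.Ioi 0)) (nhds 1) := by
    have : ContinuousAt (fun p : ℝ => ((1+2*p)*(1+p))^2) 0 := by fun_prop
    have h : Tendsto (fun p : ℝ => ((1+2*p)*(1+p))^2) (nhdsWithin 0 (Set.Ioi 0)) (nhds (((1+2*(0:ℝ))*(1+0))^2)) :=
      this.tendsto.mono_left nhdsWithin_le_nhds
    norm_num at h; exact h
  have := hnum.div hden (by norm_num)
  norm_num at this ⊢
  convert this using 2
  rfl


noncomputable def hK (p : ℝ) : ℝ := π^2/6 - 2 * Li2 (-p) - Real.log (1 + p)^2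

noncomputable def hK' (p : ℝ) : ℝ := 2 * (Real.log (1+p)/p) - 2 * Real.log (1+p) / (1+p)

noncomputable def kF (p : ℝ) : ℝ := hK p / (1 + 2*p)^2

noncomputable def kF' (p : ℝ) : ℝ :=
  (hK' p * (1 + 2*p)^2 - hK p * (2 * (1 + 2*p)^1 * 2)) / ((1 + 2*p)^2)^2

lemma hasDerivAt_hK {p : ℝ} (hp : 0 < p) : HasDerivAt hK (hK' p) p := by
  have h1 : HasDerivAt (fun q : ℝ => 2 * Li2 (-q)) (2 * (-(Real.log (1+p)/p))) p :=
    (li2_neg_hasDerivAt hp).const_mul 2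
  have h2 : HasDerivAt (fun q : ℝ => Real.log (1 + q)^2)
      (2 * Real.log (1+p)^1 * (1/(1+p))) p :=
    (hasDerivAt_log1p (by positivity)).pow 2
  have := ((hasDerivAt_const p (π^2/6)).sub h1).sub h2
  refine this.congr_deriv ?_
  unfold hK'
  field_simp
  ring

lemma hasDerivAt_kF {p : ℝ} (hp : 0 < p) : HasDerivAt kF (kF' p) p := by
  have hq : ((1:ℝ) + 2*p)^2 ≠ 0 := by positivity
  have hlin : HasDerivAt (fun q : ℝ => 1 + 2*q) 2 p := by
    simpa using ((hasDerivAt_id p).const_mul 2).const_add 1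
  have hden : HasDerivAt (fun q : ℝ => (1 + 2*q)^2) (2 * (1 + 2*p)^1 * 2) p := hlin.pow 2
  exact (hasDerivAt_hK hp).div hden hq

lemma tendsto_hK : Tendsto hK (nhdsWithin 0 (Set.Ioi 0)) (nhds (π^2/6)) := by
  have := ((tendsto_const_nhds (x := (π^2/6 : ℝ))
      (f := nhdsWithin (0:ℝ) (Set.Ioi 0))).sub (li2_tendsto.const_mul 2)).sub
    (tendsto_log1p.pow 2)
  norm_num at this
  exact this

lemma tendsto_kF : Tendsto kF (nhdsWithin 0 (Set.Ioi 0)) (nhds (π^2/6)) := by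
  have hden : Tendsto (fun p : ℝ => ((1:ℝ) + 2*p)^2) (nhdsWithin 0 (Set.Ioi 0)) (nhds 1) := by
    have hc : ContinuousAt (fun p : ℝ => ((1:ℝ) + 2*p)^2) 0 := by fun_prop
    have h : Tendsto (fun p : ℝ => ((1:ℝ) + 2*p)^2) (nhdsWithin 0 (Set.Ioi 0))
        (nhds (((1:ℝ) + 2*0)^2)) := hc.tendsto.mono_left nhdsWithin_le_nhds
    norm_num at h; exact h
  have := tendsto_hK.div hden (by norm_num)
  norm_num at this; exact this

lemma tendsto_hK' : Tendsto hK' (nhdsWithin 0 (Set.Ioi 0)) (nhds 2) := by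
  have h2 : Tendsto (fun p : ℝ => 2 * Real.log (1+p) / (1+p)) (nhdsWithin 0 (Set.Ioi 0))
      (nhds 0) := by
    have hden : Tendsto (fun p : ℝ => (1:ℝ)+p) (nhdsWithin 0 (Set.Ioi 0)) (nhds 1) := by
      have hc : ContinuousAt (fun p : ℝ => (1:ℝ)+p) 0 := by fun_prop
      have h : Tendsto (fun p : ℝ => (1:ℝ)+p) (nhdsWithin 0 (Set.Ioi 0))
          (nhds ((1:ℝ)+0)) := hc.tendsto.mono_left nhdsWithin_le_nhds
      norm_num at h; exact h
    have := (tendsto_log1p.const_mul 2).div hden (by norm_num)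
    norm_num at this; exact this
  have := (tendsto_log1p_div.const_mul 2).sub h2
  norm_num at this; exact this

lemma tendsto_kF' : Tendsto kF' (nhdsWithin 0 (Set.Ioi 0)) (nhds (2 - 2*π^2/3)) := by
  have hc1 : ContinuousAt (fun p : ℝ => ((1:ℝ) + 2*p)^2) 0 := by fun_prop
  have hden : Tendsto (fun p : ℝ => ((1:ℝ) + 2*p)^2) (nhdsWithin 0 (Set.Ioi 0)) (nhds 1) := by
    have h : Tendsto (fun p : ℝ => ((1:ℝ) + 2*p)^2) (nhdsWithin 0 (Set.Ioi 0))
        (nhds (((1:ℝ) + 2*0)^2)) := hc1.tendsto.mono_left nhdsWithin_le_nhds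
    norm_num at h; exact h
  have hlin : Tendsto (fun p : ℝ => 2 * ((1:ℝ) + 2*p)^1 * 2) (nhdsWithin 0 (Set.Ioi 0))
      (nhds 4) := by
    have hc : ContinuousAt (fun p : ℝ => 2 * ((1:ℝ) + 2*p)^1 * 2) 0 := by fun_prop
    have h : Tendsto (fun p : ℝ => 2 * ((1:ℝ) + 2*p)^1 * 2) (nhdsWithin 0 (Set.Ioi 0))
        (nhds (2 * ((1:ℝ) + 2*0)^1 * 2)) := hc.tendsto.mono_left nhdsWithin_le_nhds
    convert h using 2
    norm_num
  have hnum := (tendsto_hK'.mul hden).sub (tendsto_hK.mul hlin)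
  have hd2 : Tendsto (fun p : ℝ => (((1:ℝ) + 2*p)^2)^2) (nhdsWithin 0 (Set.Ioi 0)) (nhds 1) := by
    have := hden.pow 2; norm_num at this; exact this
  have := hnum.div hd2 (by norm_num)
  unfold kF'
  convert this using 2
  · rfl
  · ring

lemma alg (p q s l₁ l₂ f₁ f₂ k₁ k₂ : ℝ) (hd : p - q ≠ 0) (hs : s ≠ 0) :
    2/(s^2*(p-q)) * (3*(l₁-l₂)^2/(s*(p-q)) + f₁ - f₂ - (1+2*q)*k₁/s + (1+2*p)*k₂/s)
      = 2/s^2 * (3*((l₁-l₂)/(p-q))^2/s + (f₁-f₂)/(p-q)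
          + (-(1+2*p)*((k₁-k₂)/(p-q)) + 2*k₁)/s) := by
  field_simp
  ring

/-- `G₄(p₁,p₂) → 2(π² − 6)` as `(p₁,p₂) → (0,0)` within
`{(p₁,p₂) : p₁ > 0, p₂ > 0, p₁ ≠ p₂}`. -/
theorem fourth_order_two_point_at_zero :
    Tendsto (fun x : ℝ × ℝ => G4 x.1 x.2)
      (nhdsWithin (0, 0) {x : ℝ × ℝ | 0 < x.1 ∧ 0 < x.2 ∧ x.1 ≠ x.2})
      (nhds (2 * (π ^ 2 - 6))) := by
  set S : Set (ℝ × ℝ) := {x : ℝ × ℝ | 0 < x.1 ∧ 0 < x.2 ∧ x.1 ≠ x.2} with hS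
  set Φ : ℝ × ℝ → ℝ := fun x =>
    2/(1 + x.1 + x.2)^2 * (3 * ((Real.log (1+x.1) - Real.log (1+x.2))/(x.1 - x.2))^2
      / (1 + x.1 + x.2) + (fF x.1 - fF x.2)/(x.1 - x.2)
      + (-(1 + 2*x.1) * ((kF x.1 - kF x.2)/(x.1 - x.2)) + 2 * kF x.1)/(1 + x.1 + x.2)) with hΦ
  have heq : ∀ x ∈ S, G4 x.1 x.2 = Φ x := by
    rintro ⟨p, q⟩ ⟨hp, hq, hne⟩
    simp only [hΦ]
    have hd : p - q ≠ 0 := sub_ne_zero.mpr hne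
    have hs : (1:ℝ) + p + q ≠ 0 := by positivity
    have h4 : (1 + 2 * q) * (π ^ 2 / 6 - 2 * Li2 (-p) - Real.log (1 + p) ^ 2)
          / ((1 + 2 * p) ^ 2 * (1 + p + q))
        = (1+2*q) * kF p / (1+p+q) := by
      unfold kF hK; rw [← div_div, mul_div_assoc]
    have h5 : (1 + 2 * p) * (π ^ 2 / 6 - 2 * Li2 (-q) - Real.log (1 + q) ^ 2)
          / ((1 + 2 * q) ^ 2 * (1 + p + q))
        = (1+2*p) * kF q / (1+p+q) := by
      unfold kF hK; rw [← div_div, mul_div_assoc]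
    unfold G4
    rw [h4, h5]
    have hf1 : 2 * Real.log (1 + p) / (p * (1 + 2 * p) * (1 + p)) = fF p := rfl
    have hf2 : 2 * Real.log (1 + q) / (q * (1 + 2 * q) * (1 + q)) = fF q := rfl
    rw [hf1, hf2]
    exact alg p q (1+p+q) (Real.log (1+p)) (Real.log (1+q)) (fF p) (fF q) (kF p) (kF q) hd hs
  apply Tendsto.congr' (eventuallyEq_of_mem self_mem_nhdsWithin
    (fun x hx => (heq x hx).symm))
  -- component limits
  have hfst : Tendsto (fun x : ℝ × ℝ => x.1) (nhdsWithin (0,0) S)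
      (nhdsWithin 0 (Set.Ioi 0)) := by
    apply tendsto_nhdsWithin_of_tendsto_nhds_of_eventually_within
    · exact (Continuous.tendsto continuous_fst (0,0)).mono_left nhdsWithin_le_nhds
    · exact eventually_mem_nhdsWithin.mono (fun x hx => hx.1)
  have hsum : Tendsto (fun x : ℝ × ℝ => 1 + x.1 + x.2) (nhdsWithin (0,0) S) (nhds 1) := by
    have hc : ContinuousAt (fun x : ℝ × ℝ => 1 + x.1 + x.2) (0,0) := by fun_prop
    have h : Tendsto (fun x : ℝ × ℝ => 1 + x.1 + x.2) (nhdsWithin (0,0) S)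
        (nhds (1 + ((0:ℝ),(0:ℝ)).1 + ((0:ℝ),(0:ℝ)).2)) := hc.tendsto.mono_left nhdsWithin_le_nhds
    norm_num at h; exact h
  have h2p1 : Tendsto (fun x : ℝ × ℝ => 1 + 2*x.1) (nhdsWithin (0,0) S) (nhds 1) := by
    have hc : ContinuousAt (fun x : ℝ × ℝ => 1 + 2*x.1) (0,0) := by fun_prop
    have h : Tendsto (fun x : ℝ × ℝ => 1 + 2*x.1) (nhdsWithin (0,0) S)
        (nhds (1 + 2*((0:ℝ),(0:ℝ)).1)) := hc.tendsto.mono_left nhdsWithin_le_nhds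
    norm_num at h; exact h
  have hDlog : Tendsto (fun x : ℝ × ℝ => (Real.log (1+x.1) - Real.log (1+x.2))/(x.1 - x.2))
      (nhdsWithin (0,0) S) (nhds 1) := by
    have h1 : ∀ x ∈ Set.Ioi (0:ℝ), HasDerivAt (fun p : ℝ => Real.log (1+p)) (1/(1+x)) x := by
      intro x hx
      exact hasDerivAt_log1p (by simp at hx; positivity)
    have h2 : Tendsto (fun p : ℝ => 1/(1+p)) (nhdsWithin 0 (Set.Ioi 0)) (nhds 1) := by
      have hc : ContinuousAt (fun p : ℝ => 1/(1+p)) 0 := by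
        apply ContinuousAt.div continuousAt_const (by fun_prop); norm_num
      have h : Tendsto (fun p : ℝ => 1/(1+p)) (nhdsWithin 0 (Set.Ioi 0)) (nhds (1/(1+(0:ℝ)))) :=
        hc.tendsto.mono_left nhdsWithin_le_nhds
      convert h using 2
      norm_num
    exact slope_tendsto h1 h2
  have hDf : Tendsto (fun x : ℝ × ℝ => (fF x.1 - fF x.2)/(x.1 - x.2))
      (nhdsWithin (0,0) S) (nhds (-7)) :=
    slope_tendsto (fun x hx => hasDerivAt_fF hx) tendsto_fF'
  have hDk : Tendsto (fun x : ℝ × ℝ => (kF x.1 - kF x.2)/(x.1 - x.2))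
      (nhdsWithin (0,0) S) (nhds (2 - 2*π^2/3)) :=
    slope_tendsto (fun x hx => hasDerivAt_kF hx) tendsto_kF'
  have hk1 : Tendsto (fun x : ℝ × ℝ => kF x.1) (nhdsWithin (0,0) S) (nhds (π^2/6)) :=
    tendsto_kF.comp hfst
  have hmain : Tendsto Φ (nhdsWithin (0,0) S)
      (nhds (2/1^2 * (3 * 1^2/1 + (-7) + (-1 * (2 - 2*π^2/3) + 2 * (π^2/6))/1))) := by
    apply Tendsto.mul
    · exact (tendsto_const_nhds.div (hsum.pow 2) (by norm_num))
    · apply Tendsto.add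
      · apply Tendsto.add
        · exact ((hDlog.pow 2).const_mul 3).div hsum (by norm_num)
        · exact hDf
      · exact (((h2p1.neg).mul hDk).add (hk1.const_mul 2)).div hsum (by norm_num)
  convert hmain using 2
  ring
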